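/- Let p be an odd prime and 1 ≤ d ≤ p-2. With I(d) defined as the set of i ∈ {1,...,p-1} such that u_{ν-i} + (d·u_{ν-i} mod p) > p (u a primitive root mod p, ν = (p-1)/2), one has I(d) = I(p-1-d). -/

import Mathlib

theorem stmt11 (p : ℕ) (hp : p.Prime) (hodd : Odd p) (u : ℕ)
    (hu : IsPrimitiveRoot (u : ZMod p) (p - 1)) (d : ℕ) (hd1 : 1 ≤ d) (hd2 : d ≤ p - 2) :
    (Finset.Icc 1 (p - 1)).filter
        (fun i => p < u ^ ((p - 1) / 2 + (p - 1) - i) % p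
          + d * (u ^ ((p - 1) / 2 + (p - 1) - i) % p) % p)
      = (Finset.Icc 1 (p - 1)).filter
        (fun i => p < u ^ ((p - 1) / 2 + (p - 1) - i) % p
          + (p - 1 - d) * (u ^ ((p - 1) / 2 + (p - 1) - i) % p) % p) := by
  haveI := Fact.mk hp
  have hp3 : 3 ≤ p := by
    rcases hodd with ⟨k, hk⟩
    have := hp.two_le
    omega
  have hu0 : (u : ZMod p) ≠ 0 := (hu.isUnit (by omega : p - 1 ≠ 0)).ne_zero
  ext i
  simp only [Finset.mem_filter, Finset.mem_Icc]
  set k := (p - 1) / 2 + (p - 1) - i with hk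
  set r := u ^ k % p with hrdef
  have hrp : r < p := Nat.mod_lt _ (by omega)
  have hpow : ¬ p ∣ u ^ k := by
    intro h
    have h0 : ((u ^ k : ℕ) : ZMod p) = 0 := (ZMod.natCast_eq_zero_iff _ _).2 h
    push_cast at h0
    exact pow_ne_zero k hu0 h0
  have hr1 : 1 ≤ r := by
    have : u ^ k % p ≠ 0 := fun h => hpow (Nat.dvd_of_mod_eq_zero h)
    omega
  have hrnd : ¬ p ∣ r := fun h => by have := Nat.le_of_dvd (by omega) h; omega
  have hsp : d * r % p < p := Nat.mod_lt _ (by omega)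
  have htp : (p - 1 - d) * r % p < p := Nat.mod_lt _ (by omega)
  have hs1 : 1 ≤ d * r % p := by
    have hnd : ¬ p ∣ d * r := by
      rw [hp.dvd_mul]
      push_neg
      refine ⟨fun h => ?_, hrnd⟩
      have := Nat.le_of_dvd (by omega) h
      omega
    have : d * r % p ≠ 0 := fun h => hnd (Nat.dvd_of_mod_eq_zero h)
    omega
  have ht1 : 1 ≤ (p - 1 - d) * r % p := by
    have hnd : ¬ p ∣ (p - 1 - d) * r := by
      rw [hp.dvd_mul]
      push_neg
      refine ⟨fun h => ?_, hrnd⟩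
      have := Nat.le_of_dvd (by omega) h
      omega
    have : (p - 1 - d) * r % p ≠ 0 := fun h => hnd (Nat.dvd_of_mod_eq_zero h)
    omega
  have hsum : p ∣ d * r % p + (p - 1 - d) * r % p + r := by
    rw [← ZMod.natCast_eq_zero_iff]
    have h1 : ((d * r % p + (p - 1 - d) * r % p + r : ℕ) : ZMod p)
        = (((d + (p - 1 - d) + 1) * r : ℕ) : ZMod p) := by
      push_cast [ZMod.natCast_mod]
      ring
    have h2 : d + (p - 1 - d) + 1 = p := by omega
    rw [h1, h2]
    push_cast
    simp
  obtain ⟨m, hm⟩ := hsum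
  have hm1 : 1 ≤ m := by
    rcases Nat.eq_zero_or_pos m with h | h
    · subst h; omega
    · exact h
  have hm2 : m < 3 := by
    have h3 : p * m < p * 3 := by omega
    exact Nat.lt_of_mul_lt_mul_left h3
  interval_cases m <;> constructor <;> rintro ⟨hi, hgt⟩ <;> exact ⟨hi, by omega⟩
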